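/- Consider the cardinality constraint with ℓ = (N - Δ)/2 and u = (N + Δ)/2 for 0 ≤ Δ ≤ N (with N, Δ of equal parity). In the large-N counting of quantum regions (grouping the partial sums in the guaranteed-feasible interval [ℓ, u - (N - i)] into one region whenever nonempty), the maximum number of quantum regions over all links is N - Δ when Δ ≥ N/3 and (N + Δ)/2 when Δ ≤ N/3; in particular the maximum over Δ of this quantity equals 2N/3, attained at Δ = N/3. -/
import Mathlib
set_option maxHeartbeats 2000000


/-- Continuum (large-N) count of quantum regions at link t for the cardinality
constraint ℓ ≤ ∑ x_i ≤ u with ℓ = (N-Δ)/2, u = (N+Δ)/2: the number of feasible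
partial-sum values outside the guaranteed-feasible interval [ℓ, u-(N-t)], i.e. the
length of the feasible interval [max(0, ℓ-(N-t)), min(t,u)] minus the length of its
intersection with the guaranteed interval (which counts as a single region, an O(1)
contribution ignored in the large-N limit). -/
noncomputable def qcount (N Δ t : ℝ) : ℝ :=
  let ℓ := (N - Δ) / 2
  let u := (N + Δ) / 2
  let fLo := max 0 (ℓ - (N - t))
  let fHi := min t u
  let gHi := u - (N - t)
  (fHi - fLo) - max 0 (min fHi gHi - max fLo ℓ)

lemma qcount_eq (N Δ t : ℝ) : qcount N Δ t =
    (min t ((N + Δ) / 2) - max 0 ((N - Δ) / 2 - (N - t))) -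
      max 0 (min (min t ((N + Δ) / 2)) ((N + Δ) / 2 - (N - t)) -
        max (max 0 ((N - Δ) / 2 - (N - t))) ((N - Δ) / 2)) := rfl

/-- In the large-N counting of quantum regions, the maximum number of quantum
regions over all links is N - Δ when Δ ≥ N/3 and (N + Δ)/2 when Δ ≤ N/3; the
maximum over Δ of this quantity is 2N/3, attained at Δ = N/3. -/
theorem stmt_10 (N Δ : ℝ) (hN : 0 < N) (h0 : 0 ≤ Δ) (hΔN : Δ ≤ N) :
    IsGreatest (qcount N Δ '' Set.Icc (0 : ℝ) N)
      (if N / 3 ≤ Δ then N - Δ else (N + Δ) / 2) ∧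
    IsGreatest ((fun d => if N / 3 ≤ d then N - d else (N + d) / 2) '' Set.Icc (0 : ℝ) N)
      (2 * N / 3) ∧
    (fun d => if N / 3 ≤ d then N - d else (N + d) / 2) (N / 3) = 2 * N / 3 := by
  refine ⟨⟨?_, ?_⟩, ⟨?_, ?_⟩, ?_⟩
  · by_cases h : N / 3 ≤ Δ
    · refine ⟨N - Δ, ⟨by linarith, by linarith⟩, ?_⟩
      rw [if_pos h, qcount_eq]
      simp only [min_def, max_def]
      split_ifs <;> linarith
    · refine ⟨(N + Δ) / 2, ⟨by linarith, by linarith⟩, ?_⟩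
      rw [if_neg h, qcount_eq]
      simp only [min_def, max_def]
      split_ifs <;> linarith
  · rintro x ⟨t, ⟨ht0, htN⟩, rfl⟩
    rw [qcount_eq]
    simp only [min_def, max_def]
    split_ifs <;> linarith
  · refine ⟨N / 3, ⟨by linarith, by linarith⟩, ?_⟩
    simp only [if_pos le_rfl]; ring
  · rintro x ⟨d, ⟨hd0, hdN⟩, rfl⟩
    simp only
    split_ifs <;> linarith
  · simp only [if_pos le_rfl]; ring
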